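/- Let X be an infinite-dimensional real Banach space having cotype q for some finite q, and let q_0 = inf{ q : X has cotype q }. If p > q_0, then for every strongly measurable Pettis integrable function f : [0,1] → X, for μ-almost every t ∈ [0,1] one has h^{-1/p} · ‖P-∫_t^{t+h} f dμ‖_X → 0 as h → 0⁺. -/

import Mathlib

open MeasureTheory Filter Set
open scoped ENNReal NNReal Topology

/-- Lebesgue measure on `[0,1]`. -/
noncomputable def mu01 : Measure ℝ := volume.restrict (Set.Icc 0 1)

/-- `x` is the Pettis integral of `f` over the set `E` (w.r.t. the measure `μ`). -/
def IsPettisIntegralOn {X : Type*} [NormedAddCommGroup X] [NormedSpace ℝ X]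
    (f : ℝ → X) (μ : Measure ℝ) (E : Set ℝ) (x : X) : Prop :=
  ∀ φ : X →L[ℝ] ℝ, φ x = ∫ ω in E, φ (f ω) ∂μ

/-- `f` is Pettis integrable w.r.t. `μ`. -/
def PettisIntegrable {X : Type*} [NormedAddCommGroup X] [NormedSpace ℝ X]
    (f : ℝ → X) (μ : Measure ℝ) : Prop :=
  (∀ φ : X →L[ℝ] ℝ, Integrable (fun ω => φ (f ω)) μ) ∧
  ∀ E : Set ℝ, MeasurableSet E → ∃ x : X, IsPettisIntegralOn f μ E x

/-- `X` has cotype `q`. -/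
def HasCotype (X : Type*) [NormedAddCommGroup X] (q : ℝ) : Prop :=
  ∃ C : ℝ, ∀ (n : ℕ) (x : Fin n → X),
    (∑ i, ‖x i‖ ^ q) ^ (1 / q) ≤
      C * Real.sqrt ((2 : ℝ) ^ (-(n : ℝ)) *
        ∑ ε : Fin n → Bool, ‖∑ i, (if ε i then x i else -x i)‖ ^ 2)

lemma cotype_finset_bound {X : Type*} [NormedAddCommGroup X] {q C S : ℝ}
    (hq : 0 < q) (hC : 0 ≤ C) (hS : 0 ≤ S)
    (hcot : ∀ (n : ℕ) (x : Fin n → X),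
      (∑ i, ‖x i‖ ^ q) ^ (1 / q) ≤
        C * Real.sqrt ((2 : ℝ) ^ (-(n : ℝ)) *
          ∑ ε : Fin n → Bool, ‖∑ i, (if ε i then x i else -x i)‖ ^ 2))
    {ι : Type*} (v : Finset ι) (x : ι → X)
    (hsum : ∀ w ⊆ v, ‖∑ i ∈ w, x i‖ ≤ S) :
    ∑ i ∈ v, ‖x i‖ ^ q ≤ (2 * C * S) ^ q := by
  classical
  set n := v.card with hn
  set e := v.equivFin with he
  set y : Fin n → X := fun i => x (e.symm i) with hy
  have hsum' : ∑ i, ‖y i‖ ^ q = ∑ i ∈ v, ‖x i‖ ^ q := by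
    rw [hy, ← Finset.sum_coe_sort v (fun i => ‖x i‖ ^ q)]
    exact Equiv.sum_comp e.symm (fun a => ‖x (a : ι)‖ ^ q)
  -- bound the signed sums
  have hsign : ∀ ε : Fin n → Bool, ‖∑ i, (if ε i then y i else -y i)‖ ≤ 2 * S := by
    intro ε
    have split : ∑ i, (if ε i then y i else -y i) =
        (∑ i ∈ Finset.univ.filter (fun i => ε i = true), y i)
          - ∑ i ∈ Finset.univ.filter (fun i => ¬ ε i = true), y i := by
      rw [sub_eq_add_neg, ← Finset.sum_neg_distrib]
      exact Finset.sum_ite _ _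
    have key : ∀ (P : Fin n → Prop) [DecidablePred P],
        ‖∑ i ∈ Finset.univ.filter P, y i‖ ≤ S := by
      intro P _
      have inj : Function.Injective (fun i : Fin n => (e.symm i : ι)) := by
        intro a b hab
        exact e.symm.injective (Subtype.ext hab)
      have : ∑ i ∈ Finset.univ.filter P, y i =
          ∑ j ∈ (Finset.univ.filter P).image (fun i => (e.symm i : ι)), x j := by
        rw [Finset.sum_image (fun a _ b _ h => inj h)]
      rw [this]
      apply hsum
      intro j hj
      simp only [Finset.mem_image] at hj
      obtain ⟨i, _, rfl⟩ := hj
      exact (e.symm i).2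
    rw [split]
    calc ‖_ - _‖ ≤ ‖_‖ + ‖_‖ := norm_sub_le _ _
      _ ≤ S + S := add_le_add (key _) (key _)
      _ = 2 * S := by ring
  have hsqrt : Real.sqrt ((2 : ℝ) ^ (-(n : ℝ)) *
      ∑ ε : Fin n → Bool, ‖∑ i, (if ε i then y i else -y i)‖ ^ 2) ≤ 2 * S := by
    have hbound : (∑ ε : Fin n → Bool, ‖∑ i, (if ε i then y i else -y i)‖ ^ 2)
        ≤ (2 ^ n : ℝ) * (2 * S) ^ 2 := by
      calc (∑ ε : Fin n → Bool, ‖∑ i, (if ε i then y i else -y i)‖ ^ 2)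
          ≤ ∑ _ε : Fin n → Bool, (2 * S) ^ 2 := by
            apply Finset.sum_le_sum
            intro ε _
            exact pow_le_pow_left₀ (norm_nonneg _) (hsign ε) 2
        _ = (Fintype.card (Fin n → Bool) : ℝ) * (2 * S) ^ 2 := by
            rw [Finset.sum_const, Finset.card_univ, nsmul_eq_mul]
        _ = (2 ^ n : ℝ) * (2 * S) ^ 2 := by simp [Fintype.card_fun]
    have h2n : (2 : ℝ) ^ (-(n : ℝ)) = ((2 : ℝ) ^ n)⁻¹ := by
      rw [Real.rpow_neg (by norm_num), Real.rpow_natCast]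
    have : (2 : ℝ) ^ (-(n : ℝ)) *
        (∑ ε : Fin n → Bool, ‖∑ i, (if ε i then y i else -y i)‖ ^ 2) ≤ (2 * S) ^ 2 := by
      rw [h2n]
      calc ((2 : ℝ) ^ n)⁻¹ * _ ≤ ((2 : ℝ) ^ n)⁻¹ * ((2 ^ n : ℝ) * (2 * S) ^ 2) := by
            apply mul_le_mul_of_nonneg_left hbound
            positivity
        _ = (2 * S) ^ 2 := by
            field_simp
    calc Real.sqrt _ ≤ Real.sqrt ((2 * S) ^ 2) := Real.sqrt_le_sqrt this
      _ = 2 * S := Real.sqrt_sq (by positivity)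
  have main := hcot n y
  have hmain : (∑ i, ‖y i‖ ^ q) ^ (1 / q) ≤ C * (2 * S) :=
    le_trans main (mul_le_mul_of_nonneg_left hsqrt hC)
  have hnn : (0 : ℝ) ≤ ∑ i, ‖y i‖ ^ q := by
    apply Finset.sum_nonneg
    intro i _
    exact Real.rpow_nonneg (norm_nonneg _) q
  have := Real.rpow_le_rpow (Real.rpow_nonneg hnn _) hmain hq.le
  rw [← Real.rpow_mul hnn, one_div_mul_cancel hq.ne', Real.rpow_one] at this
  rw [← hsum']
  calc ∑ i, ‖y i‖ ^ q ≤ (C * (2 * S)) ^ q := this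
    _ = (2 * C * S) ^ q := by ring_nf

lemma nu_biUnion {X : Type*} [NormedAddCommGroup X] [NormedSpace ℝ X]
    (f : ℝ → X) (ν : Set ℝ → X)
    (hint : ∀ φ : X →L[ℝ] ℝ, Integrable (fun ω => φ (f ω)) mu01)
    (hν : ∀ E : Set ℝ, MeasurableSet E → ∀ φ : X →L[ℝ] ℝ, φ (ν E) = ∫ ω in E, φ (f ω) ∂mu01)
    {ι : Type*} (w : Finset ι) (E : ι → Set ℝ) (hE : ∀ i ∈ w, MeasurableSet (E i))
    (hd : Set.Pairwise ↑w (Function.onFun Disjoint E)) :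
    ν (⋃ i ∈ w, E i) = ∑ i ∈ w, ν (E i) := by
  rw [NormedSpace.eq_iff_forall_dual_eq ℝ]
  intro φ
  have hU : MeasurableSet (⋃ i ∈ w, E i) := Finset.measurableSet_biUnion _ hE
  rw [hν _ hU φ, map_sum]
  rw [integral_biUnion_finset w hE hd (fun i _ => (hint φ).integrableOn)]
  exact Finset.sum_congr rfl fun i hi => (hν (E i) (hE i hi) φ).symm

lemma nu_bounded {X : Type*} [NormedAddCommGroup X] [NormedSpace ℝ X]
    (f : ℝ → X) (ν : Set ℝ → X)
    (hint : ∀ φ : X →L[ℝ] ℝ, Integrable (fun ω => φ (f ω)) mu01)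
    (hν : ∀ E : Set ℝ, MeasurableSet E → ∀ φ : X →L[ℝ] ℝ, φ (ν E) = ∫ ω in E, φ (f ω) ∂mu01) :
    ∃ S : ℝ, 0 ≤ S ∧ ∀ E : Set ℝ, MeasurableSet E → ‖ν E‖ ≤ S := by
  set g : {E : Set ℝ // MeasurableSet E} → (StrongDual ℝ X) →L[ℝ] ℝ :=
    fun E => NormedSpace.inclusionInDoubleDual ℝ X (ν E.1) with hg
  have hpt : ∀ φ : StrongDual ℝ X, ∃ Cφ, ∀ E, ‖g E φ‖ ≤ Cφ := by
    intro φ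
    refine ⟨∫ ω, ‖φ (f ω)‖ ∂mu01, fun E => ?_⟩
    have : g E φ = φ (ν E.1) := rfl
    rw [this, hν E.1 E.2 φ]
    calc ‖∫ ω in E.1, φ (f ω) ∂mu01‖ ≤ ∫ ω in E.1, ‖φ (f ω)‖ ∂mu01 :=
          norm_integral_le_integral_norm _
      _ ≤ ∫ ω, ‖φ (f ω)‖ ∂mu01 :=
          setIntegral_le_integral (hint φ).norm (Eventually.of_forall fun ω => norm_nonneg _)
  obtain ⟨C', hC'⟩ := banach_steinhaus hpt
  refine ⟨max C' 0, le_max_right _ _, fun E hE => ?_⟩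
  apply NormedSpace.norm_le_dual_bound ℝ (ν E) (le_max_right _ _)
  intro φ
  calc ‖φ (ν E)‖ = ‖g ⟨E, hE⟩ φ‖ := rfl
    _ ≤ ‖g ⟨E, hE⟩‖ * ‖φ‖ := (g ⟨E, hE⟩).le_opNorm φ
    _ ≤ max C' 0 * ‖φ‖ := by
        apply mul_le_mul_of_nonneg_right (le_trans (hC' _) (le_max_left _ _)) (norm_nonneg _)

lemma bad_set_null {X : Type*} [NormedAddCommGroup X] [NormedSpace ℝ X]
    (f : ℝ → X) (ν : Set ℝ → X)
    (hint : ∀ φ : X →L[ℝ] ℝ, Integrable (fun ω => φ (f ω)) mu01)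
    (hν : ∀ E : Set ℝ, MeasurableSet E → ∀ φ : X →L[ℝ] ℝ, φ (ν E) = ∫ ω in E, φ (f ω) ∂mu01)
    {S : ℝ} (hS0 : 0 ≤ S) (hSb : ∀ E : Set ℝ, MeasurableSet E → ‖ν E‖ ≤ S)
    {q C p : ℝ} (hq2 : 2 ≤ q) (hC0 : 0 ≤ C)
    (hcot : ∀ (n : ℕ) (x : Fin n → X),
      (∑ i, ‖x i‖ ^ q) ^ (1 / q) ≤
        C * Real.sqrt ((2 : ℝ) ^ (-(n : ℝ)) *
          ∑ ε : Fin n → Bool, ‖∑ i, (if ε i then x i else -x i)‖ ^ 2))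
    (hqp : q < p) {ε : ℝ} (hε : 0 < ε) :
    volume {t : ℝ | t ∈ Set.Ico (0:ℝ) 1 ∧
      ∃ᶠ h in 𝓝[>] (0:ℝ), ε * h ^ (1/p) < ‖ν (Set.Ioc t (t+h))‖} = 0 := by
  have hq0 : 0 < q := lt_of_lt_of_le two_pos hq2
  have hp0 : 0 < p := hq0.trans hqp
  set γ : ℝ := 1 - q / p with hγdef
  have hγ : 0 < γ := by
    have : q / p < 1 := (div_lt_one hp0).2 hqp
    simp only [hγdef]; linarith
  set K : ℝ := ε ^ (-q) * (2 * C * S) ^ q with hKdef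
  have hK0 : 0 ≤ K :=
    mul_nonneg (Real.rpow_nonneg hε.le _) (Real.rpow_nonneg (by positivity) _)
  set s := {t : ℝ | t ∈ Set.Ico (0:ℝ) 1 ∧
      ∃ᶠ h in 𝓝[>] (0:ℝ), ε * h ^ (1/p) < ‖ν (Set.Ioc t (t+h))‖} with hsdef
  suffices H : ∀ δ : ℝ, 0 < δ → volume s ≤ ENNReal.ofReal (δ ^ γ * K) by
    have htend : Tendsto (fun n : ℕ => ENNReal.ofReal ((1 / ((n : ℝ) + 1)) ^ γ * K))
        atTop (𝓝 0) := by
      have t1 : Tendsto (fun n : ℕ => (1 / ((n : ℝ) + 1)) ^ γ) atTop (𝓝 ((0:ℝ) ^ γ)) :=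
        ((Real.continuousAt_rpow_const 0 γ (Or.inr hγ.le)).tendsto).comp
          tendsto_one_div_add_atTop_nhds_zero_nat
      rw [Real.zero_rpow hγ.ne'] at t1
      have t2 : Tendsto (fun n : ℕ => (1 / ((n : ℝ) + 1)) ^ γ * K) atTop (𝓝 (0 * K)) :=
        t1.mul_const K
      rw [zero_mul] at t2
      have := (ENNReal.continuous_ofReal.tendsto 0).comp t2
      rwa [ENNReal.ofReal_zero] at this
    have hle : volume s ≤ 0 :=
      ge_of_tendsto htend (Eventually.of_forall fun n => H _ (by positivity))
    exact le_antisymm hle zero_le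
  intro δ hδ
  classical
  set tfam : Set (ℝ × ℝ) := {a | 0 < a.2 ∧ a.2 ≤ δ ∧
      ε * a.2 ^ (1/p) < ‖ν (Set.Ioc a.1 (a.1 + a.2))‖} with htfam
  obtain ⟨u, hut, hucount, hudisj, hucov⟩ :=
    Vitali.exists_disjoint_covering_ae volume s tfam 6 (fun a => a.2) (fun a => a.1)
      (fun a => Set.Icc a.1 (a.1 + a.2))
      (by
        rintro a ⟨h0, -, -⟩
        rw [Real.closedBall_eq_Icc]
        exact Set.Icc_subset_Icc (by linarith) le_rfl)
      (by
        rintro a ⟨h0, -, -⟩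
        rw [Real.volume_closedBall, Real.volume_Icc, add_sub_cancel_left]
        have : (2 : ℝ) * (3 * a.2) = 6 * a.2 := by ring
        rw [this, ENNReal.ofReal_mul (by norm_num)]
        simp [ENNReal.ofReal_ofNat])
      (by
        rintro a ⟨h0, -, -⟩
        rw [interior_Icc]
        exact Set.nonempty_Ioo.2 (by linarith))
      (fun a _ => isClosed_Icc)
      (by
        rintro x ⟨hx1, hx2⟩ η hη
        have hmem : Set.Ioc (0:ℝ) (min δ η) ∈ 𝓝[>] (0:ℝ) :=
          Ioc_mem_nhdsGT_of_mem ⟨le_rfl, lt_min hδ hη⟩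
        obtain ⟨h, hlt, hmm⟩ := (hx2.and_eventually hmem).exists
        exact ⟨(x, h), ⟨hmm.1, le_trans hmm.2 (min_le_left _ _), hlt⟩,
          le_trans hmm.2 (min_le_right _ _), rfl⟩)
  set U := ⋃ a ∈ u, Set.Icc (a : ℝ × ℝ).1 (a.1 + a.2) with hU
  have step1 : volume s ≤ ∑' (a : ↥u), volume (Set.Icc (a : ℝ × ℝ).1 ((a : ℝ × ℝ).1 + (a : ℝ × ℝ).2)) := by
    calc volume s ≤ volume ((s \ U) ∪ U) := measure_mono (Set.subset_diff_union s U)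
      _ ≤ volume (s \ U) + volume U := measure_union_le _ _
      _ = volume U := by rw [hucov, zero_add]
      _ ≤ _ := measure_biUnion_le volume hucount _
  refine le_trans step1 ?_
  have hvolIcc : ∀ a : ↥u, volume (Set.Icc (a : ℝ × ℝ).1 ((a : ℝ × ℝ).1 + (a : ℝ × ℝ).2))
      = ENNReal.ofReal ((a : ℝ × ℝ).2) := by
    intro a
    rw [Real.volume_Icc, add_sub_cancel_left]
  rw [tsum_congr hvolIcc, ENNReal.tsum_eq_iSup_sum]
  apply iSup_le
  intro F
  have hmemt : ∀ a : ↥u, (a : ℝ × ℝ) ∈ tfam := fun a => hut a.2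
  set E : ↥u → Set ℝ := fun a => Set.Ioc (a : ℝ × ℝ).1 ((a : ℝ × ℝ).1 + (a : ℝ × ℝ).2) with hE
  have hEdisj : ∀ a b : ↥u, a ≠ b → Disjoint (E a) (E b) := by
    intro a b hab
    exact Disjoint.mono Set.Ioc_subset_Icc_self Set.Ioc_subset_Icc_self
      (hudisj a.2 b.2 (fun hh => hab (Subtype.ext hh)))
  have hvar : ∑ a ∈ F, ‖ν (E a)‖ ^ q ≤ (2 * C * S) ^ q := by
    apply cotype_finset_bound hq0 hC0 hS0 hcot F (fun a => ν (E a))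
    intro w hw
    rw [← nu_biUnion f ν hint hν w E (fun a _ => measurableSet_Ioc)
      (fun a _ b _ hab => hEdisj a b hab)]
    exact hSb _ (Finset.measurableSet_biUnion _ fun a _ => measurableSet_Ioc)
  have hterm : ∀ a ∈ F, ((a : ℝ × ℝ).2) ≤ δ ^ γ * (ε ^ (-q) * ‖ν (E a)‖ ^ q) := by
    intro a _
    obtain ⟨h0, hle, hlt⟩ := hmemt a
    set h : ℝ := (a : ℝ × ℝ).2
    have h1 : h = h ^ γ * h ^ (q / p) := by
      rw [← Real.rpow_add h0, hγdef, sub_add_cancel, Real.rpow_one]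
    have h2 : h ^ γ ≤ δ ^ γ := Real.rpow_le_rpow h0.le hle hγ.le
    have hfrac : h ^ (1/p) ≤ ε⁻¹ * ‖ν (E a)‖ := by
      have := mul_le_mul_of_nonneg_left hlt.le (inv_nonneg.2 hε.le)
      rwa [inv_mul_cancel_left₀ hε.ne'] at this
    have h3 : h ^ (q / p) ≤ ε ^ (-q) * ‖ν (E a)‖ ^ q := by
      have e1 : q / p = (1/p) * q := by ring
      calc h ^ (q / p) = (h ^ (1/p)) ^ q := by rw [e1, Real.rpow_mul h0.le]
        _ ≤ (ε⁻¹ * ‖ν (E a)‖) ^ q :=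
            Real.rpow_le_rpow (Real.rpow_nonneg h0.le _) hfrac hq0.le
        _ = ε ^ (-q) * ‖ν (E a)‖ ^ q := by
            rw [Real.mul_rpow (inv_nonneg.2 hε.le) (norm_nonneg _),
              Real.inv_rpow hε.le, ← Real.rpow_neg hε.le]
    calc h = h ^ γ * h ^ (q / p) := h1
      _ ≤ δ ^ γ * (ε ^ (-q) * ‖ν (E a)‖ ^ q) :=
          mul_le_mul h2 h3 (Real.rpow_nonneg h0.le _) (Real.rpow_nonneg hδ.le _)
  have hreal : ∑ a ∈ F, ((a : ℝ × ℝ).2) ≤ δ ^ γ * K := by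
    calc ∑ a ∈ F, ((a : ℝ × ℝ).2)
        ≤ ∑ a ∈ F, δ ^ γ * (ε ^ (-q) * ‖ν (E a)‖ ^ q) := Finset.sum_le_sum hterm
      _ = δ ^ γ * (ε ^ (-q) * ∑ a ∈ F, ‖ν (E a)‖ ^ q) := by
          rw [← Finset.mul_sum, ← Finset.mul_sum]
      _ ≤ δ ^ γ * (ε ^ (-q) * (2 * C * S) ^ q) := by
          apply mul_le_mul_of_nonneg_left _ (Real.rpow_nonneg hδ.le _)
          exact mul_le_mul_of_nonneg_left hvar (Real.rpow_nonneg hε.le _)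
      _ = δ ^ γ * K := by rw [hKdef]
  calc ∑ a ∈ F, ENNReal.ofReal ((a : ℝ × ℝ).2)
      = ENNReal.ofReal (∑ a ∈ F, ((a : ℝ × ℝ).2)) :=
        (ENNReal.ofReal_sum_of_nonneg (fun a _ => (hmemt a).1.le)).symm
    _ ≤ ENNReal.ofReal (δ ^ γ * K) := ENNReal.ofReal_le_ofReal hreal

theorem statement5 {X : Type*} [NormedAddCommGroup X] [NormedSpace ℝ X] [CompleteSpace X]
    (hX : ¬ FiniteDimensional ℝ X)
    (hcot : ∃ q : ℝ, 2 ≤ q ∧ HasCotype X q)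
    (q₀ : ℝ) (hq₀ : q₀ = sInf {q : ℝ | 2 ≤ q ∧ HasCotype X q})
    (p : ℝ) (hp : q₀ < p) :
    ∀ f : ℝ → X, StronglyMeasurable f → PettisIntegrable f mu01 →
      ∀ G : ℝ → X, (∀ t : ℝ, IsPettisIntegralOn f mu01 (Set.Icc 0 t) (G t)) →
        ∀ᵐ t ∂mu01,
          Tendsto (fun h : ℝ => h ^ (-(1 / p)) * ‖G (t + h) - G t‖) (𝓝[>] (0 : ℝ)) (𝓝 0) := by
  intro f hsm hf G hG
  obtain ⟨hint, hex⟩ := hf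
  classical
  set ν : Set ℝ → X := fun E => if hE : MeasurableSet E then (hex E hE).choose else 0 with hνdef
  have hν : ∀ E : Set ℝ, MeasurableSet E → ∀ φ : X →L[ℝ] ℝ,
      φ (ν E) = ∫ ω in E, φ (f ω) ∂mu01 := by
    intro E hE φ
    have hνE : ν E = (hex E hE).choose := by rw [hνdef]; exact dif_pos hE
    rw [hνE]
    exact (hex E hE).choose_spec φ
  obtain ⟨S, hS0, hSb⟩ := nu_bounded f ν hint hν
  -- choose a cotype exponent q < p
  have hne : {q : ℝ | 2 ≤ q ∧ HasCotype X q}.Nonempty := hcot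
  have hbdd : BddBelow {q : ℝ | 2 ≤ q ∧ HasCotype X q} := ⟨2, fun x hx => hx.1⟩
  have hlt : sInf {q : ℝ | 2 ≤ q ∧ HasCotype X q} < p := hq₀ ▸ hp
  obtain ⟨q, ⟨hq2, C0, hC0⟩, hqp⟩ := (csInf_lt_iff hbdd hne).mp hlt
  have hp0 : 0 < p := lt_trans (lt_of_lt_of_le two_pos hq2) hqp
  set C : ℝ := max C0 0 with hCdef
  have hC0' : 0 ≤ C := le_max_right _ _
  have hcotC : ∀ (n : ℕ) (x : Fin n → X),
      (∑ i, ‖x i‖ ^ q) ^ (1 / q) ≤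
        C * Real.sqrt ((2 : ℝ) ^ (-(n : ℝ)) *
          ∑ ε : Fin n → Bool, ‖∑ i, (if ε i then x i else -x i)‖ ^ 2) := by
    intro n x
    exact le_trans (hC0 n x)
      (mul_le_mul_of_nonneg_right (le_max_left _ _) (Real.sqrt_nonneg _))
  -- the difference of the primitive is the Pettis integral over `Ioc`
  have hGd : ∀ t h : ℝ, 0 ≤ t → 0 < h → G (t + h) - G t = ν (Set.Ioc t (t + h)) := by
    intro t h ht hh
    rw [NormedSpace.eq_iff_forall_dual_eq ℝ]
    intro φ
    rw [map_sub, hG (t + h) φ, hG t φ, hν _ measurableSet_Ioc φ]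
    have hsplit : Set.Icc (0:ℝ) t ∪ Set.Ioc t (t + h) = Set.Icc 0 (t + h) :=
      Set.Icc_union_Ioc_eq_Icc ht (by linarith)
    have hdisj : Disjoint (Set.Icc (0:ℝ) t) (Set.Ioc t (t + h)) :=
      Disjoint.mono Set.Icc_subset_Iic_self Set.Ioc_subset_Ioi_self (Iic_disjoint_Ioi le_rfl)
    rw [← hsplit, setIntegral_union hdisj measurableSet_Ioc
      (hint φ).integrableOn (hint φ).integrableOn]
    ring
  -- bad sets are null
  have hbad : ∀ k : ℕ, mu01 {t : ℝ | t ∈ Set.Ico (0:ℝ) 1 ∧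
      ∃ᶠ h in 𝓝[>] (0:ℝ), (1 / ((k:ℝ)+1)) * h ^ (1/p) < ‖ν (Set.Ioc t (t+h))‖} = 0 := by
    intro k
    have hεk : (0:ℝ) < 1 / ((k:ℝ)+1) := by positivity
    have hvol := bad_set_null f ν hint hν hS0 hSb hq2 hC0' hcotC hqp hεk
    have : mu01 {t : ℝ | t ∈ Set.Ico (0:ℝ) 1 ∧
        ∃ᶠ h in 𝓝[>] (0:ℝ), (1 / ((k:ℝ)+1)) * h ^ (1/p) < ‖ν (Set.Ioc t (t+h))‖}
        ≤ volume {t : ℝ | t ∈ Set.Ico (0:ℝ) 1 ∧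
        ∃ᶠ h in 𝓝[>] (0:ℝ), (1 / ((k:ℝ)+1)) * h ^ (1/p) < ‖ν (Set.Ioc t (t+h))‖} := by
      rw [mu01, Measure.restrict_apply' measurableSet_Icc]
      exact measure_mono Set.inter_subset_left
    exact le_antisymm (le_trans this (le_of_eq hvol)) zero_le
  have h1 : ∀ᵐ t ∂mu01, t ∈ Set.Ico (0:ℝ) 1 := by
    rw [ae_iff]
    have hsub : {t : ℝ | ¬ t ∈ Set.Ico (0:ℝ) 1} ∩ Set.Icc 0 1 ⊆ {(1:ℝ)} := by
      rintro t ⟨ht1, ht2⟩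
      simp only [Set.mem_Ico, not_and, not_lt] at ht1
      have := ht1 ht2.1
      exact Set.mem_singleton_iff.mpr (le_antisymm ht2.2 this)
    rw [mu01, Measure.restrict_apply' measurableSet_Icc]
    exact le_antisymm (le_trans (measure_mono hsub) (le_of_eq Real.volume_singleton)) zero_le
  have h2 : ∀ᵐ t ∂mu01, ∀ k : ℕ, ¬ (t ∈ Set.Ico (0:ℝ) 1 ∧
      ∃ᶠ h in 𝓝[>] (0:ℝ), (1 / ((k:ℝ)+1)) * h ^ (1/p) < ‖ν (Set.Ioc t (t+h))‖) :=
    ae_all_iff.2 fun k => measure_eq_zero_iff_ae_notMem.mp (hbad k)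
  filter_upwards [h1, h2] with t ht1 ht2
  rw [Metric.tendsto_nhds]
  intro ε' hε'
  obtain ⟨k, hk'⟩ := exists_nat_one_div_lt hε'
  have hev : ∀ᶠ h in 𝓝[>] (0:ℝ),
      ¬ ((1 / ((k:ℝ)+1)) * h ^ (1/p) < ‖ν (Set.Ioc t (t+h))‖) := by
    rw [← Filter.not_frequently]
    exact fun hfreq => ht2 k ⟨ht1, hfreq⟩
  filter_upwards [hev, self_mem_nhdsWithin] with h hhk hh
  have hh0 : (0:ℝ) < h := hh
  rw [not_lt] at hhk
  rw [← hGd t h ht1.1 hh0] at hhk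
  have hnn : (0:ℝ) ≤ h ^ (-(1/p)) * ‖G (t + h) - G t‖ :=
    mul_nonneg (Real.rpow_nonneg hh0.le _) (norm_nonneg _)
  rw [dist_zero_right, Real.norm_eq_abs, abs_of_nonneg hnn]
  have hcalc : h ^ (-(1/p)) * ‖G (t + h) - G t‖ ≤ 1 / ((k:ℝ)+1) := by
    calc h ^ (-(1/p)) * ‖G (t + h) - G t‖
        ≤ h ^ (-(1/p)) * ((1 / ((k:ℝ)+1)) * h ^ (1/p)) :=
          mul_le_mul_of_nonneg_left hhk (Real.rpow_nonneg hh0.le _)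
      _ = (1 / ((k:ℝ)+1)) * (h ^ (-(1/p)) * h ^ (1/p)) := by ring
      _ = 1 / ((k:ℝ)+1) := by
          rw [← Real.rpow_add hh0, neg_add_cancel, Real.rpow_zero, mul_one]
  exact lt_of_le_of_lt hcalc hk'
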